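/- With p as defined (sending x to the partitioned word whose block x_{i-1} receives the letter x_i - x_{i-1} in order of i, with x_0 = 0), the following recovery algorithm inverts p: start at block t = 0; repeatedly remove the leftmost remaining letter v of block t, output t + v, and set t := t + v; then the sequence of outputs equals x_1, x_2, ..., x_{k+1}, and the algorithm empties all blocks without ever attempting to read from an empty block. -/

import Mathlib

def Xseq (m k : ℕ) (x : Fin (k + 1) → ZMod m) : ℕ → ZMod m :=
  fun i => if h : 1 ≤ i ∧ i ≤ k + 1 then x ⟨i - 1, by omega⟩ else 0

def pMap (m k : ℕ) (x : Fin (k + 1) → ZMod m) : ZMod m → List (ZMod m) :=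
  fun b => ((List.range (k + 1)).filter (fun i => decide (Xseq m k x i = b))).map
    (fun i => Xseq m k x (i + 1) - Xseq m k x i)

/-- The recovery algorithm: starting at block `t`, repeatedly remove the leftmost
letter `v` of the current block, output `t + v`, and move to block `t + v`.
It returns `none` if it ever attempts to read from an empty block; otherwise it
returns the list of outputs together with the final state of the blocks. -/
def recover (m : ℕ) : ℕ → ZMod m → (ZMod m → List (ZMod m)) →
    Option (List (ZMod m) × (ZMod m → List (ZMod m)))
  | 0, _, B => some ([], B)
  | n + 1, t, B =>
    match B t with
    | [] => none
    | v :: rest =>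
      (recover m n (t + v) (Function.update B t rest)).map
        (fun r => ((t + v) :: r.1, r.2))


def Bk (m k : ℕ) (X : ℕ → ZMod m) (j : ℕ) : ZMod m → List (ZMod m) :=
  fun b => ((List.range (k + 1)).filter
      (fun i => decide (j ≤ i) && decide (X i = b))).map
    (fun i => X (i + 1) - X i)

lemma Bk_top (m k : ℕ) (X : ℕ → ZMod m) : Bk m k X (k + 1) = fun _ => [] := by
  funext b
  simp only [Bk, List.map_eq_nil_iff, List.filter_eq_nil_iff]
  intro i hi
  simp only [List.mem_range] at hi
  simp [Nat.not_le.mpr hi]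

lemma Bk_succ (m k : ℕ) (X : ℕ → ZMod m) (j n : ℕ) (h : j + (n + 1) = k + 1) :
    Bk m k X j = fun b =>
      if b = X j then (X (j + 1) - X j) :: Bk m k X (j + 1) b
      else Bk m k X (j + 1) b := by
  funext b
  have h1 : List.range (k + 1) = List.range j ++ (List.range (n + 1)).map (j + ·) := by
    rw [show k + 1 = j + (n + 1) from h.symm, List.range_add]
  simp only [Bk, h1, List.filter_append, List.map_append]
  have e1 : ∀ c : ℕ, j ≤ c → (List.range j).filter
      (fun i => decide (c ≤ i) && decide (X i = b)) = [] := by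
    intro c hc
    apply List.filter_eq_nil_iff.mpr
    intro i hi
    simp only [List.mem_range] at hi
    simp only [Bool.and_eq_true, decide_eq_true_eq, not_and]
    intro hci
    exact absurd hci (by omega)
  rw [e1 j le_rfl, e1 (j + 1) (by omega)]
  simp only [List.map_nil, List.nil_append]
  rw [List.range_succ_eq_map]
  simp only [List.map_cons, List.map_map, List.filter_cons]
  have comp : ((j + ·) ∘ Nat.succ) = (j + 1 + ·) := by
    funext i; simp [Function.comp]; omega
  rw [comp]
  have hfilt : ((List.range n).map (j + 1 + ·)).filter
        (fun i => decide (j ≤ i) && decide (X i = b))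
      = ((List.range n).map (j + 1 + ·)).filter
        (fun i => decide (j + 1 ≤ i) && decide (X i = b)) := by
    apply List.filter_congr
    intro i hi
    simp only [List.mem_map] at hi
    obtain ⟨a, _, rfl⟩ := hi
    simp [show j ≤ j + 1 + a by omega]
  rw [hfilt]
  by_cases hb : b = X j
  · simp [hb]
  · simp [hb, (Ne.symm hb : X j ≠ b)]

lemma recover_Bk (m k : ℕ) (X : ℕ → ZMod m) :
    ∀ n j, j + n = k + 1 →
      recover m n (X j) (Bk m k X j) =
        some ((List.range n).map (fun i => X (j + 1 + i)), fun _ => []) := by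
  intro n
  induction n with
  | zero =>
    intro j hj
    have : j = k + 1 := by omega
    subst this
    simp [recover, Bk_top]
  | succ n ih =>
    intro j hj
    rw [Bk_succ m k X j n hj]
    set B : ZMod m → List (ZMod m) := fun b =>
      if b = X j then (X (j + 1) - X j) :: Bk m k X (j + 1) b
      else Bk m k X (j + 1) b with hB
    have hBt : B (X j) = (X (j + 1) - X j) :: Bk m k X (j + 1) (X j) := by
      simp [hB]
    have hupd : Function.update B (X j) (Bk m k X (j + 1) (X j)) = Bk m k X (j + 1) := by
      funext b
      by_cases hb : b = X j
      · subst hb; simp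
      · rw [Function.update_of_ne hb, hB]
        simp [hb]
    have hsum : X j + (X (j + 1) - X j) = X (j + 1) := by ring
    rw [recover]
    rw [hBt]
    simp only []
    rw [hupd, hsum, ih (j + 1) (by omega)]
    simp only [Option.map_some]
    have hlist : (List.range (n + 1)).map (fun i => X (j + 1 + i))
        = X (j + 1) :: (List.range n).map (fun i => X (j + 1 + 1 + i)) := by
      rw [List.range_succ_eq_map, List.map_cons, List.map_map]
      congr 1
      apply List.map_congr_left
      intro i _
      simp only [Function.comp]
      congr 1
      omega
    rw [hlist]

/-- The recovery algorithm inverts `p`: applied to `p x` starting at block `0`,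
it never reads from an empty block, outputs exactly `x₁, …, x_{k+1}`, and empties
all blocks. -/
theorem recover_pMap (m k : ℕ) (hm : 1 ≤ m) (x : Fin (k + 1) → ZMod m) :
    recover m (k + 1) 0 (pMap m k x) = some (List.ofFn x, fun _ => []) := by
  have hX0 : Xseq m k x 0 = 0 := by simp [Xseq]
  have hp : pMap m k x = Bk m k (Xseq m k x) 0 := by
    funext b
    simp only [pMap, Bk]
    congr 1
  have h := recover_Bk m k (Xseq m k x) (k + 1) 0 (by omega)
  rw [hX0] at h
  rw [hp, h]
  congr 1
  congr 1
  apply List.ext_getElem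
  · simp
  · intro i h1 h2
    simp only [List.getElem_ofFn, List.getElem_map, List.getElem_range]
    have hik : i < k + 1 := by simpa using h1
    rw [Xseq, dif_pos (by omega)]
    congr 1
    simp only [Fin.mk.injEq]
    omega
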